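/- (Choi) If τ : A → B is a unital completely positive linear bijection between unital C*-algebras whose inverse is also completely positive, then τ is a *-isomorphism. -/

import Mathlib

set_option linter.unusedSectionVars false
set_option maxHeartbeats 1000000


/-- An element of a star ring is positive if it is of the form `b* b`. -/
def IsPosElem {R : Type*} [NonUnitalSemiring R] [StarRing R] (a : R) : Prop :=
  ∃ b : R, a = star b * b

/-- A linear map between star algebras is completely positive if all of its matrix
amplifications map positive matrices to positive matrices. -/
def IsCPmap {A B : Type*} [NonUnitalSemiring A] [StarRing A] [Module ℂ A]
    [NonUnitalSemiring B] [StarRing B] [Module ℂ B] (τ : A →ₗ[ℂ] B) : Prop :=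
  ∀ (n : ℕ) (a : Matrix (Fin n) (Fin n) A), IsPosElem a → IsPosElem (a.map τ)

lemma isPosElem_iff_nonneg {A : Type*} [CStarAlgebra A] [PartialOrder A] [StarOrderedRing A]
    (a : A) : IsPosElem a ↔ 0 ≤ a := by
  constructor
  · rintro ⟨b, rfl⟩; exact star_mul_self_nonneg b
  · intro ha
    refine ⟨CFC.sqrt a, ?_⟩
    rw [(IsSelfAdjoint.of_nonneg (CFC.sqrt_nonneg a)).star_eq, CFC.sqrt_mul_sqrt_self a ha]

lemma quad_nonneg {B : Type*} [NonUnitalSemiring B] [StarRing B] [PartialOrder B]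
    [StarOrderedRing B] {n : ℕ} {M : Matrix (Fin n) (Fin n) B} (hM : IsPosElem M)
    (v : Fin n → B) : 0 ≤ ∑ i, ∑ j, star (v i) * M i j * v j := by
  obtain ⟨c, rfl⟩ := hM
  have key : ∑ i, ∑ j, star (v i) * (star c * c) i j * v j
      = ∑ k, star (∑ j, c k j * v j) * (∑ j, c k j * v j) := by
    have h1 : ∀ i j, star (v i) * (star c * c) i j * v j
        = ∑ k, (star (v i) * star (c k i)) * (c k j * v j) := by
      intro i j
      rw [Matrix.mul_apply]
      simp only [Matrix.star_apply, Finset.mul_sum, Finset.sum_mul]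
      exact Finset.sum_congr rfl fun k _ => by noncomm_ring
    have h2 : ∀ k, star (∑ j, c k j * v j) * (∑ j, c k j * v j)
        = ∑ i, ∑ j, (star (v i) * star (c k i)) * (c k j * v j) := by
      intro k
      rw [star_sum, Finset.sum_mul_sum]
      exact Finset.sum_congr rfl fun i _ => Finset.sum_congr rfl fun j _ => by
        rw [star_mul]
    simp only [h1, h2]
    rw [show (∑ i, ∑ j, ∑ k, (star (v i) * star (c k i)) * (c k j * v j))
        = ∑ i, ∑ k, ∑ j, (star (v i) * star (c k i)) * (c k j * v j) from
      Finset.sum_congr rfl fun i _ => Finset.sum_comm]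
    exact Finset.sum_comm
  rw [key]
  exact Finset.sum_nonneg fun k _ => star_mul_self_nonneg _

section
variable {A B : Type*} [Ring A] [StarRing A] [Module ℂ A]
  [Ring B] [StarRing B] [Module ℂ B]

lemma choiMatrix_pos (a : A) :
    IsPosElem (Matrix.of ![![1, a], ![star a, star a * a]]) := by
  refine ⟨Matrix.of ![![1, a], ![0, 0]], ?_⟩
  ext i j
  fin_cases i <;> fin_cases j <;>
    simp [Matrix.mul_apply, Fin.sum_univ_two, Matrix.star_apply]

lemma cp_star_map (τ : A →ₗ[ℂ] B) (hcp : IsCPmap τ) (a : A) : τ (star a) = star (τ a) := by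
  obtain ⟨c, hc⟩ := hcp 2 _ (choiMatrix_pos a)
  have hsa : star ((Matrix.of ![![1, a], ![star a, star a * a]]).map τ)
      = (Matrix.of ![![1, a], ![star a, star a * a]]).map τ := by
    rw [hc, star_mul, star_star]
  have h2 := congrFun (congrFun hsa 1) 0
  simpa [Matrix.star_apply, Matrix.map_apply] using h2.symm

lemma cp_pos (τ : A →ₗ[ℂ] B) (hcp : IsCPmap τ) {z : A} (hz : IsPosElem z) :
    IsPosElem (τ z) := by
  obtain ⟨w, rfl⟩ := hz
  obtain ⟨c, hc⟩ := hcp 1 (Matrix.of fun _ _ => star w * w)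
    ⟨Matrix.of fun _ _ => w, by ext i j; simp [Matrix.mul_apply, Matrix.star_apply]⟩
  refine ⟨c 0 0, ?_⟩
  have h2 := congrFun (congrFun hc 0) 0
  simpa [Matrix.mul_apply, Matrix.star_apply, Matrix.map_apply] using h2

lemma cp_schwarz [PartialOrder B] [StarOrderedRing B]
    (τ : A →ₗ[ℂ] B) (h1 : τ 1 = 1) (hcp : IsCPmap τ) (a : A) :
    star (τ a) * τ a ≤ τ (star a * a) := by
  have hq := quad_nonneg (hcp 2 _ (choiMatrix_pos a)) ![-(τ a), 1]
  have hstar := cp_star_map τ hcp a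
  rw [← sub_nonneg]
  simp only [Fin.sum_univ_two, Matrix.map_apply, Matrix.of_apply, Matrix.cons_val_zero,
    Matrix.cons_val_one, Matrix.head_cons, h1, hstar, star_neg, star_one, one_mul, mul_one,
    mul_neg, neg_mul, neg_neg] at hq
  convert hq using 1
  noncomm_ring

end

/-- Choi: a unital completely positive linear bijection between unital C*-algebras
whose inverse is also completely positive is a *-isomorphism. -/
theorem choi_cp_order_iso
    {A B : Type*}
    [NormedRing A] [StarRing A] [CStarRing A] [NormedAlgebra ℂ A]
    [StarModule ℂ A] [CompleteSpace A]
    [NormedRing B] [StarRing B] [CStarRing B] [NormedAlgebra ℂ B]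
    [StarModule ℂ B] [CompleteSpace B]
    (τ : A ≃ₗ[ℂ] B) (hτ1 : τ 1 = 1)
    (hτ : IsCPmap (τ : A →ₗ[ℂ] B)) (hτinv : IsCPmap (τ.symm : B →ₗ[ℂ] A)) :
    (∀ a b : A, τ (a * b) = τ a * τ b) ∧ (∀ a : A, τ (star a) = star (τ a)) := by
  letI : CStarAlgebra A := { }
  letI : CStarAlgebra B := { }
  letI : PartialOrder A := CStarAlgebra.spectralOrder A
  haveI : StarOrderedRing A := CStarAlgebra.spectralOrderedRing A
  letI : PartialOrder B := CStarAlgebra.spectralOrder B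
  haveI : StarOrderedRing B := CStarAlgebra.spectralOrderedRing B
  have hstar : ∀ a : A, τ (star a) = star (τ a) := by
    intro a
    have := cp_star_map (τ : A →ₗ[ℂ] B) hτ a
    simpa only [LinearEquiv.coe_coe] using this
  have hτ1' : (τ : A →ₗ[ℂ] B) 1 = 1 := hτ1
  have hsymm1 : (τ.symm : B →ₗ[ℂ] A) 1 = 1 := by
    simp only [LinearEquiv.coe_coe]
    rw [← hτ1, LinearEquiv.symm_apply_apply]
  have hmono : ∀ {x y : A}, x ≤ y → τ x ≤ τ y := by
    intro x y hxy
    rw [← sub_nonneg] at hxy ⊢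
    rw [← isPosElem_iff_nonneg] at hxy ⊢
    have h1 : τ y - τ x = τ (y - x) := (map_sub τ y x).symm
    rw [h1]
    have := cp_pos (τ : A →ₗ[ℂ] B) hτ hxy
    simpa only [LinearEquiv.coe_coe] using this
  have sq : ∀ a : A, τ (star a * a) = star (τ a) * τ a := by
    intro a
    refine le_antisymm ?_ ?_
    · have h2 := cp_schwarz (τ.symm : B →ₗ[ℂ] A) hsymm1 hτinv (τ a)
      simp only [LinearEquiv.coe_coe, LinearEquiv.symm_apply_apply] at h2
      have h3 := hmono h2
      rwa [LinearEquiv.apply_symm_apply] at h3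
    · have := cp_schwarz (τ : A →ₗ[ℂ] B) hτ1' hτ a
      simpa only [LinearEquiv.coe_coe] using this
  have cross : ∀ a b : A, τ (star a * b) + τ (star b * a)
      = star (τ a) * τ b + star (τ b) * τ a := by
    intro a b
    have e1 : τ (star (a + b) * (a + b))
        = τ (star a * a) + (τ (star a * b) + τ (star b * a)) + τ (star b * b) := by
      simp only [star_add, add_mul, mul_add, map_add]
      abel
    have e2 : star (τ (a + b)) * τ (a + b)
        = star (τ a) * τ a + (star (τ a) * τ b + star (τ b) * τ a) + star (τ b) * τ b := by
      simp only [map_add, star_add, add_mul, mul_add]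
      abel
    have h := e1.symm.trans ((sq (a + b)).trans e2)
    rw [sq a, sq b] at h
    calc τ (star a * b) + τ (star b * a)
        = -(star (τ a) * τ a) + (star (τ a) * τ a + (τ (star a * b) + τ (star b * a))
            + star (τ b) * τ b) + -(star (τ b) * τ b) := by abel
      _ = -(star (τ a) * τ a) + (star (τ a) * τ a + (star (τ a) * τ b + star (τ b) * τ a)
            + star (τ b) * τ b) + -(star (τ b) * τ b) := by rw [h]
      _ = star (τ a) * τ b + star (τ b) * τ a := by abel
  have key : ∀ a b : A, τ (star a * b) = star (τ a) * τ b := by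
    intro a b
    have c1 := cross a b
    have c2 := cross a (Complex.I • b)
    simp only [mul_smul_comm, smul_mul_assoc, map_smul, star_smul, Complex.star_def,
      Complex.conj_I, neg_smul, neg_mul, smul_mul_assoc] at c2
    have c3 : τ (star a * b) - τ (star b * a)
        = star (τ a) * τ b - star (τ b) * τ a := by
      apply smul_right_injective B Complex.I_ne_zero
      simpa [smul_sub, sub_eq_add_neg] using c2
    have c4 : (2 : ℂ) • τ (star a * b) = (2 : ℂ) • (star (τ a) * τ b) := by
      calc (2 : ℂ) • τ (star a * b)
          = (τ (star a * b) + τ (star b * a)) + (τ (star a * b) - τ (star b * a)) := by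
            rw [two_smul]; abel
        _ = (star (τ a) * τ b + star (τ b) * τ a)
            + (star (τ a) * τ b - star (τ b) * τ a) := by rw [c1, c3]
        _ = (2 : ℂ) • (star (τ a) * τ b) := by rw [two_smul]; abel
    exact smul_right_injective B two_ne_zero c4
  refine ⟨fun a b => ?_, hstar⟩
  have h := key (star a) b
  rwa [star_star, hstar, star_star] at h
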